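/- Let (C, ◇, †) be a guarded Conway category. Define Tr_† by Tr_†^X_{A,B}(f) = π_r ∘ f ∘ (p_X × id_A) ∘ ⟨(π_ℓ ∘ f)†, id_A⟩ for f : ◇X × A → X × B. Then (C, ◇, Tr_†) is a guarded traced category (Tr_† satisfies left and right tightening, sliding, both vanishing axioms, superposing and yanking), and moreover the dagger is recovered: Tr_†^X_{A,X}(⟨f, f⟩) = f† for every f : ◇X × A → X. -/

import Mathlib

open CategoryTheory CategoryTheory.Limits

universe v u

attribute [local simp] prod.lift_fst prod.lift_snd prod.lift_fst_assoc prod.lift_snd_assoc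

/-- A guarded Conway category structure: a guarded fixpoint operator `dag` satisfying the
fixpoint, parameter, (simplified) composition and double dagger identities. -/
structure IsGuardedConway {C : Type u} [Category.{v} C] [HasFiniteProducts C]
    (D : C ⥤ C) (p : 𝟭 C ⟶ D)
    (dag : ∀ {X Y : C}, (D.obj X ⨯ Y ⟶ X) → (Y ⟶ X)) : Prop where
  fix : ∀ {X Y : C} (f : D.obj X ⨯ Y ⟶ X),
      dag f = prod.lift (dag f) (𝟙 Y) ≫ prod.map (p.app X) (𝟙 Y) ≫ f
  param : ∀ {X Y Z : C} (f : D.obj X ⨯ Y ⟶ X) (h : Z ⟶ Y),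
      dag (prod.map (𝟙 (D.obj X)) h ≫ f) = h ≫ dag f
  comp : ∀ {X Y Z : C} (f : D.obj X ⨯ Y ⟶ Z) (g : Z ⟶ X),
      dag (f ≫ g) = dag (prod.map (D.map g) (𝟙 Y) ≫ f) ≫ g
  ddag : ∀ {X Y : C} (f : D.obj X ⨯ (D.obj X ⨯ Y) ⟶ X),
      dag (dag f) = dag (prod.lift prod.fst (𝟙 (D.obj X ⨯ Y)) ≫ f)

/-- A guarded trace operator: a family `Tr : Hom(◇X × A, X × B) → Hom(A, B)` satisfying
left/right tightening, sliding (together: naturality), vanishing (V1), (V2),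
superposing (S) and yanking (Y). -/
structure IsGuardedTrace {C : Type u} [Category.{v} C] [HasFiniteProducts C]
    (D : C ⥤ C) (p : 𝟭 C ⟶ D)
    (Tr : ∀ {X A B : C}, (D.obj X ⨯ A ⟶ X ⨯ B) → (A ⟶ B)) : Prop where
  left_tightening : ∀ {X A A' B : C} (f : D.obj X ⨯ A ⟶ X ⨯ B) (g : A' ⟶ A),
      Tr (prod.map (𝟙 (D.obj X)) g ≫ f) = g ≫ Tr f
  right_tightening : ∀ {X A B B' : C} (f : D.obj X ⨯ A ⟶ X ⨯ B) (g : B ⟶ B'),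
      Tr (f ≫ prod.map (𝟙 X) g) = Tr f ≫ g
  sliding : ∀ {X X' A B : C} (f : D.obj X ⨯ A ⟶ X' ⨯ B) (g : X' ⟶ X),
      Tr (f ≫ prod.map g (𝟙 B)) = Tr (prod.map (D.map g) (𝟙 A) ≫ f)
  vanishing₁ : ∀ {A B : C} (f : D.obj (⊤_ C) ⨯ A ⟶ (⊤_ C) ⨯ B),
      Tr f = prod.lift (terminal.from A ≫ p.app (⊤_ C)) (𝟙 A) ≫ f ≫ prod.snd
  vanishing₂ : ∀ {X Y A B : C} (f : D.obj X ⨯ (D.obj Y ⨯ A) ⟶ X ⨯ (Y ⨯ B)),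
      Tr (Tr f) =
      Tr (prod.lift (prod.fst ≫ D.map prod.fst)
            (prod.lift (prod.fst ≫ D.map prod.snd) prod.snd) ≫ f ≫
          prod.lift (prod.lift prod.fst (prod.snd ≫ prod.fst)) (prod.snd ≫ prod.snd))
  superposing : ∀ {X A B E : C} (f : D.obj X ⨯ A ⟶ X ⨯ B),
      Tr (prod.lift
            (prod.lift prod.fst (prod.snd ≫ prod.fst) ≫ f ≫ prod.fst)
            (prod.lift (prod.lift prod.fst (prod.snd ≫ prod.fst) ≫ f ≫ prod.snd)
              ((prod.snd : D.obj X ⨯ (A ⨯ E) ⟶ A ⨯ E) ≫ prod.snd))) =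
        prod.map (Tr f) (𝟙 E)
  yanking : ∀ X : C,
      Tr (prod.lift prod.snd prod.fst : D.obj X ⨯ X ⟶ X ⨯ D.obj X) = p.app X

section GuardedConwayAux
namespace GuardedConwayAux

variable {C : Type u} [Category.{v} C] [HasFiniteProducts C]
  {D : C ⥤ C} {p : 𝟭 C ⟶ D}
  {dag : ∀ {X Y : C}, (D.obj X ⨯ Y ⟶ X) → (Y ⟶ X)}

theorem pnat {X Y : C} (g : X ⟶ Y) : p.app X ≫ D.map g = g ≫ p.app Y := by
  simpa using (p.naturality g).symm

theorem fix' (h : IsGuardedConway D p @dag) {X Y : C} (f : D.obj X ⨯ Y ⟶ X) :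
    dag f = prod.lift (dag f ≫ p.app X) (𝟙 Y) ≫ f := by
  conv_lhs => rw [h.fix f]
  simp [prod.lift_map_assoc]

theorem bekic (h : IsGuardedConway D p @dag) {X Y A : C}
    (F : D.obj X ⨯ (D.obj Y ⨯ A) ⟶ X) (G : D.obj X ⨯ (D.obj Y ⨯ A) ⟶ Y) :
    dag (prod.lift (prod.fst ≫ D.map prod.fst)
          (prod.lift (prod.fst ≫ D.map prod.snd) prod.snd) ≫ prod.lift F G) =
    prod.lift
      (prod.lift (dag (prod.lift (dag F ≫ p.app X) (𝟙 (D.obj Y ⨯ A)) ≫ G) ≫ p.app Y) (𝟙 A)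
        ≫ dag F)
      (dag (prod.lift (dag F ≫ p.app X) (𝟙 (D.obj Y ⨯ A)) ≫ G)) := by
  set q : D.obj (X ⨯ Y) ⨯ A ⟶ D.obj Y ⨯ A := prod.map (D.map prod.snd) (𝟙 A) with hq
  set G' : D.obj Y ⨯ A ⟶ Y :=
    prod.lift (dag F ≫ p.app X) (𝟙 (D.obj Y ⨯ A)) ≫ G with hG'
  set Θ : D.obj Y ⨯ A ⟶ X ⨯ Y := prod.lift (dag F) G' with hΘ
  set Φ : D.obj (X ⨯ Y) ⨯ (D.obj (X ⨯ Y) ⨯ A) ⟶ X ⨯ Y :=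
    prod.map (D.map prod.fst) q ≫ prod.lift F G with hΦ
  have h2a : dag Φ ≫ prod.fst = q ≫ dag F := by
    have e1 : (prod.map (𝟙 (D.obj X)) q ≫ prod.lift F G) ≫ prod.fst
        = prod.map (𝟙 (D.obj X)) q ≫ F := by simp
    have e2 : prod.map (D.map (prod.fst : X ⨯ Y ⟶ X)) (𝟙 (D.obj (X ⨯ Y) ⨯ A)) ≫
        (prod.map (𝟙 (D.obj X)) q ≫ prod.lift F G) = Φ := by
      rw [hΦ, ← Category.assoc, prod.map_map]; simp
    have := h.comp (prod.map (𝟙 (D.obj X)) q ≫ prod.lift F G) (prod.fst : X ⨯ Y ⟶ X)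
    rw [e1, h.param F q, e2] at this
    exact this.symm
  have h2 : dag Φ = q ≫ Θ := by
    apply Limits.prod.hom_ext
    · rw [h2a, hΘ]; simp
    · have hm := h2a
      conv_lhs => rw [h.fix Φ]
      rw [hΦ] at hm ⊢
      rw [hΘ, hG']
      simp only [Category.assoc, prod.lift_map_assoc, Category.comp_id, prod.map_map_assoc,
        Category.id_comp, pnat, prod.comp_lift_assoc, prod.comp_lift, prod.lift_snd,
        prod.lift_fst, prod.lift_fst_assoc, prod.lift_snd_assoc, prod.map_fst, prod.map_snd,
        prod.map_fst_assoc, prod.map_snd_assoc] at hm ⊢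
      rw [reassoc_of% hm]
  have h3a : dag (q ≫ Θ) ≫ prod.snd = dag G' := by
    have e1 : Θ ≫ prod.snd = G' := by simp [hΘ]
    have := h.comp Θ (prod.snd : X ⨯ Y ⟶ Y)
    rw [e1] at this
    rw [this]
  have h3 : dag (q ≫ Θ) = prod.lift (dag G' ≫ p.app Y) (𝟙 A) ≫ Θ := by
    have hm := h3a
    conv_lhs => rw [h.fix (q ≫ Θ)]
    rw [hq] at hm ⊢
    simp only [Category.assoc, prod.lift_map_assoc, Category.comp_id, prod.map_map_assoc,
      Category.id_comp, pnat] at hm ⊢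
    rw [reassoc_of% hm]
  have ecan : prod.lift (prod.fst : D.obj (X ⨯ Y) ⨯ A ⟶ _)
        (𝟙 (D.obj (X ⨯ Y) ⨯ A)) ≫ prod.map (D.map prod.fst) q
      = prod.lift (prod.fst ≫ D.map prod.fst)
          (prod.lift (prod.fst ≫ D.map prod.snd) prod.snd) := by
    rw [hq]; ext <;> simp
  have h1 : dag (prod.lift (prod.fst ≫ D.map prod.fst)
        (prod.lift (prod.fst ≫ D.map prod.snd) prod.snd) ≫ prod.lift F G)
      = dag (dag Φ) := by
    rw [h.ddag Φ, hΦ, ← Category.assoc, ecan]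
  rw [h1, h2, h3, hΘ, prod.comp_lift, ← fix' h G']

end GuardedConwayAux
end GuardedConwayAux

/-- **From guarded Conway operators to guarded traces.**  If `(C, ◇, †)` is a guarded
Conway category, then `Tr f = π_r ∘ f ∘ (p_X × id_A) ∘ ⟨(π_ℓ ∘ f)†, id_A⟩` is a
guarded trace operator, and moreover the dagger is recovered: `Tr ⟨f, f⟩ = f†`. -/
theorem guardedConway_to_guardedTrace
    {C : Type u} [Category.{v} C] [HasFiniteProducts C]
    (D : C ⥤ C) (p : 𝟭 C ⟶ D)
    (dag : ∀ {X Y : C}, (D.obj X ⨯ Y ⟶ X) → (Y ⟶ X))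
    (hdag : IsGuardedConway D p @dag) :
    IsGuardedTrace D p (fun {X A B} (f : D.obj X ⨯ A ⟶ X ⨯ B) =>
      prod.lift (dag (f ≫ prod.fst)) (𝟙 A) ≫ prod.map (p.app X) (𝟙 A) ≫ f ≫ prod.snd) ∧
    ∀ (X A : C) (f : D.obj X ⨯ A ⟶ X),
      prod.lift (dag (prod.lift f f ≫ prod.fst)) (𝟙 A) ≫
          prod.map (p.app X) (𝟙 A) ≫ prod.lift f f ≫ prod.snd = dag f := by
  refine ⟨⟨?_, ?_, ?_, ?_, ?_, ?_, ?_⟩, fun X A f => ?_⟩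
  -- left tightening
  · intro X A A' B f g
    have e : (prod.map (𝟙 (D.obj X)) g ≫ f) ≫ prod.fst
        = prod.map (𝟙 (D.obj X)) g ≫ (f ≫ prod.fst) := Category.assoc _ _ _
    rw [e, hdag.param (f ≫ prod.fst) g]
    simp [prod.comp_lift_assoc, prod.comp_lift]
  -- right tightening
  · intro X A B B' f g
    have e : (f ≫ prod.map (𝟙 X) g) ≫ prod.fst = f ≫ prod.fst := by simp
    rw [e]; simp
  -- sliding
  · intro X X' A B f g
    have e1 : (f ≫ prod.map g (𝟙 B)) ≫ prod.fst = (f ≫ prod.fst) ≫ g := by simp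
    have e2 := hdag.comp (f ≫ prod.fst) g
    rw [e1, e2]
    simp [GuardedConwayAux.pnat]
  -- vanishing₁
  · intro A B f
    rw [show dag (f ≫ prod.fst) = terminal.from A from terminal.hom_ext _ _]
    simp
  -- vanishing₂
  · intro X Y A B f
    have key := GuardedConwayAux.bekic hdag (f ≫ prod.fst) (f ≫ prod.snd ≫ prod.fst)
    have e1 : (prod.lift (prod.fst ≫ D.map prod.fst)
          (prod.lift (prod.fst ≫ D.map prod.snd) prod.snd) ≫ f ≫
          prod.lift (prod.lift prod.fst (prod.snd ≫ prod.fst)) (prod.snd ≫ prod.snd))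
          ≫ prod.fst
        = prod.lift (prod.fst ≫ D.map prod.fst)
            (prod.lift (prod.fst ≫ D.map prod.snd) prod.snd) ≫
          prod.lift (f ≫ prod.fst) (f ≫ prod.snd ≫ prod.fst) := by
      simp
    have e2 : (prod.lift (dag (f ≫ prod.fst)) (𝟙 (D.obj Y ⨯ A)) ≫
          prod.map (p.app X) (𝟙 (D.obj Y ⨯ A)) ≫ f ≫ prod.snd) ≫ prod.fst
        = prod.lift (dag (f ≫ prod.fst) ≫ p.app X) (𝟙 (D.obj Y ⨯ A)) ≫
            (f ≫ prod.snd ≫ prod.fst) := by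
      simp
    rw [e1, e2, key]
    simp [prod.comp_lift_assoc, prod.comp_lift, GuardedConwayAux.pnat]
  -- superposing
  · intro X A B E f
    have em : (prod.lift prod.fst (prod.snd ≫ prod.fst) : D.obj X ⨯ (A ⨯ E) ⟶ D.obj X ⨯ A)
        = prod.map (𝟙 (D.obj X)) prod.fst := by ext <;> simp
    have edag : dag (prod.lift prod.fst (prod.snd ≫ prod.fst) ≫ f ≫ prod.fst)
        = (prod.fst : A ⨯ E ⟶ A) ≫ dag (f ≫ prod.fst) := by
      rw [em]; exact hdag.param (f ≫ prod.fst) prod.fst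
    apply Limits.prod.hom_ext <;> simp [edag, prod.comp_lift_assoc, prod.comp_lift]
  -- yanking
  · intro X
    have hsnd : dag (prod.snd : D.obj X ⨯ X ⟶ X) = 𝟙 X := by
      have := GuardedConwayAux.fix' hdag (prod.snd : D.obj X ⨯ X ⟶ X)
      simpa using this
    simp [hsnd]
  -- dagger recovery
  · rw [prod.lift_fst f f, prod.lift_snd f f]
    exact (hdag.fix f).symm
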